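/- arXiv:2303.17320 — 2 statements merged into one kernel-verified Lean document; each statement's English description precedes it below -/
import Mathlib

section
/- Let (X, 𝔅, μ, T) be an ergodic measure-preserving dynamical system, let A, E ∈ 𝔅 with μ(A) > 0, and let E'_A = ⋃_{k≥0} (A ∩ {r_A > k} ∩ T^{−k}(E)) be the shadow of E in A. Then μ(E'_A) = μ(E ∩ {r_A ≤ r_E}); moreover, up to a μ-null set, E'_A equals the pairwise disjoint union ⋃_{k≥0} (A ∩ {r_A > k} ∩ T^{−k}(E ∩ {r_A ≤ r_E})). -/
open MeasureTheory Filter Set ProbabilityTheory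
open scoped ENNReal Topology ENat

noncomputable section

variable {X : Type*}

/-- The instant of the `i`-th visit (after time `0`) of the orbit of `x` under `T` to `B`,
with the convention that `hitInstant T B x 0 = 0` and the value is `⊤` if there is no
such visit. -/
def hitInstant (T : X → X) (B : Set X) (x : X) : ℕ → ℕ∞
  | 0 => 0
  | (i+1) => sInf {m : ℕ∞ | ∃ n : ℕ, hitInstant T B x i < (n : ℕ∞) ∧ T^[n] x ∈ B ∧ m = (n : ℕ∞)}

/-- The first hitting time `r_B(x) = inf {k ≥ 1 : T^k x ∈ B}` (with value `⊤` if the orbit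
never enters `B`). -/
def hitTime (T : X → X) (B : Set X) (x : X) : ℕ∞ := hitInstant T B x 1

/-- The `i`-th interarrival time (gap between the `i`-th and `(i+1)`-st visits);
`interGap T B 0 x` is the first hitting time `r_B^{(1)}(x)`, and once some
visit fails to occur, all subsequent gaps are `⊤`. -/
def interGap (T : X → X) (B : Set X) (i : ℕ) (x : X) : ℝ≥0∞ :=
  if hitInstant T B x i = ⊤ then ⊤
  else ((hitInstant T B x (i+1) - hitInstant T B x i : ℕ∞) : ℝ≥0∞)

/-- The shadow set `E'_A = ⋃_{k ≥ 0} (A ∩ {r_A > k} ∩ T^{-k} E)` of `E` in `A`. -/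
def shadow (T : X → X) (A E : Set X) : Set X :=
  ⋃ k : ℕ, A ∩ {x | (k : ℕ∞) < hitTime T A x} ∩ (T^[k]) ⁻¹' E

/-- The induced (first-return) map `T_A(x) = T^{r_A(x)}(x)` (junk value `x` if the orbit of
`x` never returns to `A`). -/
def inducedMap (T : X → X) (A : Set X) (x : X) : X :=
  T^[sInf {n : ℕ | 1 ≤ n ∧ T^[n] x ∈ A}] x

/-- The rescaled interarrival process `c · Φ_B : x ↦ (c · r_B^{(i)}(x))_{i ≥ 1}`,
as a random element of `ℕ → ℝ≥0∞`. -/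
def rescaledProcess (T : X → X) (B : Set X) (c : ℝ≥0∞) (x : X) : ℕ → ℝ≥0∞ :=
  fun i => c * interGap T B i x

/-- Convergence in distribution: the laws of the random elements `f n : X → (ℕ → ℝ≥0∞)`
under the measures `P n` converge weakly to `ν` (tested against bounded continuous
real functions, with `ℕ → ℝ≥0∞` carrying the product topology). -/
def ConvInDist [MeasurableSpace X] (P : ℕ → Measure X)
    (f : ℕ → X → (ℕ → ℝ≥0∞)) (ν : Measure (ℕ → ℝ≥0∞)) : Prop :=
  ∀ g : BoundedContinuousFunction (ℕ → ℝ≥0∞) ℝ,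
    Tendsto (fun n => ∫ x, g (f n x) ∂(P n)) atTop (𝓝 (∫ y, g y ∂ν))

end

section aux

variable {X : Type*} {T : X → X} {A B E : Set X} {x : X}

lemma hitTime_eq (T : X → X) (B : Set X) (x : X) :
    hitTime T B x = sInf {m : ℕ∞ | ∃ n : ℕ, 0 < n ∧ T^[n] x ∈ B ∧ m = (n : ℕ∞)} := by
  show hitInstant T B x 1 = _
  rw [hitInstant]
  congr 1
  ext m
  constructor
  · rintro ⟨n, hn, hB, rfl⟩
    refine ⟨n, ?_, hB, rfl⟩
    rw [hitInstant] at hn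
    exact_mod_cast hn
  · rintro ⟨n, hn, hB, rfl⟩
    refine ⟨n, ?_, hB, rfl⟩
    rw [hitInstant]
    exact_mod_cast hn

lemma lt_hitTime_iff {k : ℕ} :
    (k : ℕ∞) < hitTime T B x ↔ ∀ n : ℕ, 0 < n → n ≤ k → T^[n] x ∉ B := by
  rw [hitTime_eq]
  constructor
  · intro h n hn hnk hB
    have h2 : sInf {m : ℕ∞ | ∃ n : ℕ, 0 < n ∧ T^[n] x ∈ B ∧ m = (n : ℕ∞)} ≤ (n : ℕ∞) :=
      sInf_le ⟨n, hn, hB, rfl⟩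
    have := lt_of_lt_of_le h h2
    exact absurd hnk (by exact_mod_cast not_le.2 (by exact_mod_cast this))
  · intro h
    have h1 : ((k+1 : ℕ) : ℕ∞) ≤ sInf {m : ℕ∞ | ∃ n : ℕ, 0 < n ∧ T^[n] x ∈ B ∧ m = (n : ℕ∞)} := by
      refine le_sInf ?_
      rintro m ⟨n, hn, hB, rfl⟩
      have : k + 1 ≤ n := Nat.succ_le_of_lt (not_le.1 fun hle => h n hn hle hB)
      exact_mod_cast this
    exact lt_of_lt_of_le (by exact_mod_cast Nat.lt_succ_self k) h1

lemma hitTime_le_iff {n : ℕ} :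
    hitTime T B x ≤ (n : ℕ∞) ↔ ∃ m : ℕ, 0 < m ∧ m ≤ n ∧ T^[m] x ∈ B := by
  rw [← not_lt, lt_hitTime_iff]
  push_neg
  rfl

lemma hitTime_pos : (0 : ℕ∞) < hitTime T B x := by
  exact (lt_hitTime_iff (k := 0)).2 (fun n hn hn0 _ => by omega)

lemma hitTime_eq_top_iff :
    hitTime T B x = ⊤ ↔ ∀ n : ℕ, 0 < n → T^[n] x ∉ B := by
  constructor
  · intro h n hn hB
    have := (hitTime_le_iff (T := T) (B := B) (x := x) (n := n)).2 ⟨n, hn, le_refl n, hB⟩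
    rw [h] at this
    exact absurd this (by simp)
  · intro h
    by_contra hne
    obtain ⟨m, hm⟩ : ∃ m : ℕ, hitTime T B x = (m : ℕ∞) := ⟨(hitTime T B x).toNat, (ENat.coe_toNat hne).symm⟩
    obtain ⟨j, hj0, hjm, hjB⟩ := hitTime_le_iff.1 hm.le
    exact h j hj0 hjB

lemma hitTime_le_hitTime_iff :
    hitTime T A x ≤ hitTime T E x ↔
      ∀ n : ℕ, 0 < n → T^[n] x ∈ E → ∃ m : ℕ, 0 < m ∧ m ≤ n ∧ T^[m] x ∈ A := by
  constructor
  · intro h n hn hE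
    have hEn : hitTime T E x ≤ (n : ℕ∞) := hitTime_le_iff.2 ⟨n, hn, le_refl n, hE⟩
    exact hitTime_le_iff.1 (h.trans hEn)
  · intro h
    by_cases htop : hitTime T E x = ⊤
    · rw [htop]; exact le_top
    obtain ⟨N, hN⟩ : ∃ N : ℕ, hitTime T E x = (N : ℕ∞) :=
      ⟨(hitTime T E x).toNat, (ENat.coe_toNat htop).symm⟩
    obtain ⟨m, hm0, hmN, hmE⟩ := hitTime_le_iff.1 hN.le
    obtain ⟨m', hm'0, hm'm, hm'A⟩ := h m hm0 hmE
    rw [hN]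
    exact (hitTime_le_iff.2 ⟨m', hm'0, hm'm.trans hmN, hm'A⟩)

end aux
section aux2

variable {X : Type*} [MeasurableSpace X] {T : X → X} {A E F : Set X}

lemma measurableSet_lt_hitTime (hT : Measurable T) (hA : MeasurableSet A) (k : ℕ) :
    MeasurableSet {x | (k : ℕ∞) < hitTime T A x} := by
  have : {x | (k : ℕ∞) < hitTime T A x} = ⋂ n ∈ Set.Icc 1 k, (T^[n]) ⁻¹' Aᶜ := by
    ext x
    simp only [Set.mem_setOf_eq, Set.mem_iInter, Set.mem_Icc, Set.mem_preimage, Set.mem_compl_iff,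
      lt_hitTime_iff]
    exact ⟨fun h n hn => h n hn.1 hn.2, fun h n hn hnk => h n ⟨hn, hnk⟩⟩
  rw [this]
  exact MeasurableSet.biInter (Set.to_countable _)
    (fun n _ => (hT.iterate n) hA.compl)

lemma measurableSet_hitTime_le (hT : Measurable T) (hA : MeasurableSet A) (hE : MeasurableSet E) :
    MeasurableSet {x | hitTime T A x ≤ hitTime T E x} := by
  have : {x | hitTime T A x ≤ hitTime T E x} =
      ⋂ n : ℕ, ((T^[n+1]) ⁻¹' E)ᶜ ∪ ⋃ m ∈ Set.Icc 1 (n+1), (T^[m]) ⁻¹' A := by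
    ext x
    simp only [Set.mem_setOf_eq, Set.mem_iInter, Set.mem_union, Set.mem_compl_iff,
      Set.mem_preimage, Set.mem_iUnion, Set.mem_Icc, hitTime_le_hitTime_iff]
    constructor
    · intro h n
      by_cases hE' : T^[n+1] x ∈ E
      · obtain ⟨m, hm0, hmn, hmA⟩ := h (n+1) (Nat.succ_pos n) hE'
        exact Or.inr ⟨m, ⟨hm0, hmn⟩, hmA⟩
      · exact Or.inl hE'
    · intro h n hn hE'
      obtain ⟨m, rfl⟩ : ∃ m, n = m + 1 := ⟨n - 1, by omega⟩
      rcases h m with h' | ⟨m', ⟨h1, h2⟩, h3⟩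
      · exact absurd hE' h'
      · exact ⟨m', h1, h2, h3⟩
  rw [this]
  exact MeasurableSet.iInter fun n => (((hT.iterate (n+1)) hE).compl).union
    (MeasurableSet.biUnion (Set.to_countable _) fun m _ => (hT.iterate m) hA)

end aux2
section aux3

variable {X : Type*} [MeasurableSpace X] {T : X → X} {A E F : Set X}
  {μ : MeasureTheory.Measure X}

open MeasureTheory Filter Set

lemma hitTime_eq_top_null [IsProbabilityMeasure μ] (hErg : Ergodic T μ)
    (hA : MeasurableSet A) (hApos : 0 < μ A) :
    μ {x | hitTime T A x = ⊤} = 0 := by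
  have hT : Measurable T := hErg.measurable
  set U : Set X := ⋃ n : ℕ, (T^[n+1]) ⁻¹' A with hU
  have hUm : MeasurableSet U := MeasurableSet.iUnion fun n => (hT.iterate (n+1)) hA
  have hsub : T ⁻¹' U ⊆ U := by
    rintro x hx
    simp only [hU, Set.mem_preimage, Set.mem_iUnion] at hx ⊢
    obtain ⟨n, hn⟩ := hx
    exact ⟨n + 1, by rwa [Function.iterate_succ_apply]⟩
  rcases hErg.ae_empty_or_univ_of_preimage_ae_le hUm.nullMeasurableSet
      (HasSubset.Subset.eventuallyLE hsub) with h | h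
  · exfalso
    have hA1 : T ⁻¹' A ⊆ U := by
      intro x hx
      simp only [hU, Set.mem_iUnion]
      exact ⟨0, by simpa using hx⟩
    have : μ U = 0 := by rw [measure_congr h, measure_empty]
    have : μ (T ⁻¹' A) = 0 := measure_mono_null hA1 this
    rw [hErg.measure_preimage hA.nullMeasurableSet] at this
    exact absurd this (ne_of_gt hApos)
  · have hU1 : μ U = 1 := by rw [measure_congr h, measure_univ]
    have hcompl : {x | hitTime T A x = ⊤} = Uᶜ := by
      ext x
      simp only [Set.mem_setOf_eq, Set.mem_compl_iff, hU, Set.mem_iUnion, Set.mem_preimage,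
        hitTime_eq_top_iff, not_exists]
      constructor
      · intro h n
        exact h (n+1) (Nat.succ_pos n)
      · intro h n hn hB
        obtain ⟨m, rfl⟩ : ∃ m, n = m + 1 := ⟨n - 1, by omega⟩
        exact h m hB
    rw [hcompl, measure_compl hUm (measure_ne_top μ U), hU1, measure_univ, tsub_self]

omit [MeasurableSpace X] in
lemma succ_lt_hitTime_set_eq (T : X → X) (A : Set X) (k : ℕ) :
    {x | ((k+1 : ℕ) : ℕ∞) < hitTime T A x} =
      T ⁻¹' {x | (k : ℕ∞) < hitTime T A x} ∩ (T ⁻¹' A)ᶜ := by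
  ext x
  simp only [Set.mem_setOf_eq, Set.mem_inter_iff, Set.mem_preimage, Set.mem_compl_iff,
    lt_hitTime_iff]
  constructor
  · intro h
    refine ⟨fun n hn hnk => ?_, ?_⟩
    · have := h (n+1) (Nat.succ_pos n) (by omega)
      rwa [Function.iterate_succ_apply] at this
    · have := h 1 Nat.one_pos (by omega)
      simpa using this
  · rintro ⟨h1, h2⟩ n hn hnk
    obtain ⟨m, rfl⟩ : ∃ m, n = m + 1 := ⟨n - 1, by omega⟩
    rcases Nat.eq_zero_or_pos m with rfl | hm
    · simpa using h2
    · rw [Function.iterate_succ_apply]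
      exact h1 m hm (by omega)

lemma key_step (hmp : MeasureTheory.MeasurePreserving T μ μ) [IsProbabilityMeasure μ]
    (hA : MeasurableSet A) (hF : MeasurableSet F) (k : ℕ) :
    μ ({x | (k : ℕ∞) < hitTime T A x} ∩ (T^[k]) ⁻¹' F) =
      μ ({x | ((k+1 : ℕ) : ℕ∞) < hitTime T A x} ∩ (T^[k+1]) ⁻¹' F) +
        μ (A ∩ {x | (k : ℕ∞) < hitTime T A x} ∩ (T^[k]) ⁻¹' F) := by
  have hT : Measurable T := hmp.measurable
  set Z : Set X := {x | (k : ℕ∞) < hitTime T A x} ∩ (T^[k]) ⁻¹' F with hZ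
  have hZm : MeasurableSet Z := (measurableSet_lt_hitTime hT hA k).inter ((hT.iterate k) hF)
  have hsplit : T ⁻¹' Z = ({x | ((k+1 : ℕ) : ℕ∞) < hitTime T A x} ∩ (T^[k+1]) ⁻¹' F) ∪
      T ⁻¹' (A ∩ Z) := by
    have hpre : (T^[k+1]) ⁻¹' F = T ⁻¹' ((T^[k]) ⁻¹' F) := by
      ext x; simp [Function.iterate_succ_apply]
    rw [succ_lt_hitTime_set_eq, hpre]
    ext x
    by_cases hxA : T x ∈ A <;>
      simp [hZ, Set.mem_inter_iff, Set.mem_preimage, hxA]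
  have hdisj : Disjoint ({x | ((k+1 : ℕ) : ℕ∞) < hitTime T A x} ∩ (T^[k+1]) ⁻¹' F)
      (T ⁻¹' (A ∩ Z)) := by
    rw [succ_lt_hitTime_set_eq]
    refine Set.disjoint_left.2 fun x hx hx' => ?_
    exact hx.1.2 hx'.1
  calc μ Z = μ (T ⁻¹' Z) := (hmp.measure_preimage hZm.nullMeasurableSet).symm
    _ = μ ({x | ((k+1 : ℕ) : ℕ∞) < hitTime T A x} ∩ (T^[k+1]) ⁻¹' F) + μ (T ⁻¹' (A ∩ Z)) := by
        rw [hsplit]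
        exact measure_union hdisj (hT (hA.inter hZm))
    _ = _ := by
        rw [hmp.measure_preimage ((hA.inter hZm).nullMeasurableSet), hZ, Set.inter_assoc]

end aux3

section aux4

open MeasureTheory Filter Set

variable {X : Type*} [MeasurableSpace X] {T : X → X} {A E F : Set X}
  {μ : MeasureTheory.Measure X}

lemma sum_D [IsProbabilityMeasure μ] (hErg : Ergodic T μ) (hA : MeasurableSet A)
    (hApos : 0 < μ A) (hF : MeasurableSet F) :
    ∑' k : ℕ, μ (A ∩ {x | (k : ℕ∞) < hitTime T A x} ∩ (T^[k]) ⁻¹' F) = μ F := by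
  have hT : Measurable T := hErg.measurable
  set D : ℕ → Set X := fun k => A ∩ {x | (k : ℕ∞) < hitTime T A x} ∩ (T^[k]) ⁻¹' F with hD
  set Z : ℕ → Set X := fun k => {x | (k : ℕ∞) < hitTime T A x} ∩ (T^[k]) ⁻¹' F with hZdef
  have hrec : ∀ n, μ F = (∑ k ∈ Finset.range n, μ (D k)) + μ (Z n) := by
    intro n
    induction n with
    | zero =>
      simp only [Finset.range_zero, Finset.sum_empty, zero_add]
      have hZ0 : Z 0 = F := by
        ext x
        simp [hZdef, hitTime_pos]
      rw [hZ0]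
    | succ n ih =>
      have := key_step (μ := μ) hErg.toMeasurePreserving hA hF n
      rw [ih, Finset.sum_range_succ]
      show _ = _ + μ (D n) + μ (Z (n+1))
      rw [show μ (Z n) = μ (Z (n+1)) + μ (D n) from this]
      ring
  have hZto : Tendsto (fun n => μ (Z n)) atTop (𝓝 0) := by
    have hle : ∀ n, μ (Z n) ≤ μ {x | (n : ℕ∞) < hitTime T A x} :=
      fun n => measure_mono Set.inter_subset_left
    have hmono : Antitone (fun n : ℕ => {x | (n : ℕ∞) < hitTime T A x}) := by
      intro a b hab x hx
      simp only [Set.mem_setOf_eq] at hx ⊢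
      exact lt_of_le_of_lt (by exact_mod_cast hab) hx
    have hint : (⋂ n : ℕ, {x | (n : ℕ∞) < hitTime T A x}) = {x | hitTime T A x = ⊤} := by
      ext x
      simp only [Set.mem_iInter, Set.mem_setOf_eq]
      constructor
      · intro h
        by_contra hne
        obtain ⟨m, hm⟩ : ∃ m : ℕ, hitTime T A x = (m : ℕ∞) := ⟨_, (ENat.coe_toNat hne).symm⟩
        exact absurd (hm ▸ h m) (lt_irrefl _)
      · intro h n
        rw [h]
        exact WithTop.coe_lt_top n
    have htt := tendsto_measure_iInter_atTop (μ := μ)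
      (fun n => (measurableSet_lt_hitTime hT hA n).nullMeasurableSet) hmono
      ⟨0, measure_ne_top μ _⟩
    rw [hint, hitTime_eq_top_null hErg hA hApos] at htt
    exact tendsto_of_tendsto_of_tendsto_of_le_of_le tendsto_const_nhds htt
      (fun n => zero_le) hle
  have hpart : Tendsto (fun n => ∑ k ∈ Finset.range n, μ (D k)) atTop (𝓝 (∑' k, μ (D k))) :=
    ENNReal.tendsto_nat_tsum _
  have hsum : Tendsto (fun n => (∑ k ∈ Finset.range n, μ (D k)) + μ (Z n)) atTop
      (𝓝 ((∑' k, μ (D k)) + 0)) := hpart.add hZto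
  have heq : (fun n => (∑ k ∈ Finset.range n, μ (D k)) + μ (Z n)) = fun _ => μ F :=
    funext fun n => (hrec n).symm
  rw [heq] at hsum
  have := tendsto_nhds_unique tendsto_const_nhds hsum
  rw [add_zero] at this
  exact this.symm

omit [MeasurableSpace X] in
lemma shadow_mem_aux {x : X} (hx : x ∈ shadow T A E) (hne : hitTime T A x ≠ ⊤) :
    x ∈ ⋃ k : ℕ, A ∩ {x | (k : ℕ∞) < hitTime T A x} ∩
      (T^[k]) ⁻¹' (E ∩ {x | hitTime T A x ≤ hitTime T E x}) := by
  classical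
  obtain ⟨N, hN⟩ : ∃ N : ℕ, hitTime T A x = (N : ℕ∞) := ⟨_, (ENat.coe_toNat hne).symm⟩
  simp only [shadow, Set.mem_iUnion, Set.mem_inter_iff, Set.mem_preimage,
    Set.mem_setOf_eq] at hx ⊢
  obtain ⟨k, ⟨hxA, hk⟩, hkE⟩ := hx
  have hkN : k < N := by rw [hN] at hk; exact_mod_cast hk
  obtain ⟨j, hj⟩ : ∃ j, j = Nat.findGreatest (fun j => T^[j] x ∈ E) (N - 1) := ⟨_, rfl⟩
  have hjE : T^[j] x ∈ E := by
    rw [hj]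
    exact Nat.findGreatest_spec (P := fun j => T^[j] x ∈ E) (m := k) (n := N - 1) (by omega) hkE
  have hjN : j < N := by
    rw [hj]
    exact lt_of_le_of_lt (Nat.findGreatest_le _) (by omega)
  have hTN : T^[N] x ∈ A := by
    obtain ⟨m, hm0, hmN, hmA⟩ := hitTime_le_iff.1 hN.le
    have h2 : hitTime T A x ≤ (m : ℕ∞) := hitTime_le_iff.2 ⟨m, hm0, le_refl m, hmA⟩
    rw [hN] at h2
    have hNm : N ≤ m := by exact_mod_cast h2
    have : m = N := le_antisymm hmN hNm
    rwa [this] at hmA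
  refine ⟨j, ⟨hxA, by rw [hN]; exact_mod_cast hjN⟩, hjE, ?_⟩
  rw [hitTime_le_hitTime_iff]
  intro n hn hnE
  refine ⟨N - j, by omega, ?_, ?_⟩
  · by_contra hlt
    push_neg at hlt
    have hmem : T^[n + j] x ∈ E := by
      rw [Function.iterate_add_apply]
      exact hnE
    have : n + j ≤ j := by
      rw [hj] at hmem ⊢
      exact Nat.le_findGreatest (by omega) hmem
    omega
  · rw [← Function.iterate_add_apply]
    rw [show N - j + j = N by omega]
    exact hTN

omit [MeasurableSpace X] in
lemma pairwise_D (T : X → X) (A E : Set X) :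
    Pairwise (Function.onFun Disjoint
      (fun k : ℕ => A ∩ {x | (k : ℕ∞) < hitTime T A x} ∩
        (T^[k]) ⁻¹' (E ∩ {x | hitTime T A x ≤ hitTime T E x}))) := by
  have key : ∀ k j : ℕ, k < j → Disjoint
      (A ∩ {x | (k : ℕ∞) < hitTime T A x} ∩
        (T^[k]) ⁻¹' (E ∩ {x | hitTime T A x ≤ hitTime T E x}))
      (A ∩ {x | (j : ℕ∞) < hitTime T A x} ∩
        (T^[j]) ⁻¹' (E ∩ {x | hitTime T A x ≤ hitTime T E x})) := by
    intro k j hlt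
    refine Set.disjoint_left.2 fun x hxk hxj => ?_
    obtain ⟨⟨hxA, hk⟩, hkE, hkle⟩ := hxk
    obtain ⟨⟨_, hj⟩, hjE, _⟩ := hxj
    have hjE' : T^[j - k] (T^[k] x) ∈ E := by
      rw [← Function.iterate_add_apply, show j - k + k = j by omega]
      exact hjE
    obtain ⟨m, hm0, hmjk, hmA⟩ :=
      hitTime_le_hitTime_iff.1 hkle (j - k) (by omega) hjE'
    have hmA' : T^[m + k] x ∈ A := by
      rw [Function.iterate_add_apply]
      exact hmA
    have : T^[m + k] x ∉ A := lt_hitTime_iff.1 hj (m + k) (by omega) (by omega)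
    exact this hmA'
  intro k j hkj
  rcases lt_or_gt_of_ne hkj with h | h
  · exact key k j h
  · exact (key j k h).symm

end aux4

/-- For an ergodic measure-preserving system `(X, 𝔅, μ, T)`, a set `A` of
positive measure and a measurable set `E`, the shadow `E'_A` of `E` in `A` satisfies
`μ(E'_A) = μ(E ∩ {r_A ≤ r_E})`; moreover, up to a `μ`-null set, `E'_A` equals the pairwise
disjoint union `⋃_{k ≥ 0} (A ∩ {r_A > k} ∩ T^{-k}(E ∩ {r_A ≤ r_E}))`. -/
theorem statement0 {X : Type*} [MetricSpace X] [MeasurableSpace X] [BorelSpace X]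
    (T : X → X) (μ : Measure X) [IsProbabilityMeasure μ] (hErg : Ergodic T μ)
    (A E : Set X) (hA : MeasurableSet A) (hE : MeasurableSet E) (hApos : 0 < μ A) :
    μ (shadow T A E) = μ (E ∩ {x | hitTime T A x ≤ hitTime T E x}) ∧
    μ (symmDiff (shadow T A E)
        (⋃ k : ℕ, A ∩ {x | (k : ℕ∞) < hitTime T A x} ∩
          (T^[k]) ⁻¹' (E ∩ {x | hitTime T A x ≤ hitTime T E x}))) = 0 ∧
    Pairwise (Function.onFun Disjoint
      (fun k : ℕ => A ∩ {x | (k : ℕ∞) < hitTime T A x} ∩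
        (T^[k]) ⁻¹' (E ∩ {x | hitTime T A x ≤ hitTime T E x}))) := by
  have hT : Measurable T := hErg.measurable
  set F : Set X := E ∩ {x | hitTime T A x ≤ hitTime T E x} with hFdef
  have hFm : MeasurableSet F := hE.inter (measurableSet_hitTime_le hT hA hE)
  set U : Set X := ⋃ k : ℕ, A ∩ {x | (k : ℕ∞) < hitTime T A x} ∩ (T^[k]) ⁻¹' F with hUdef
  have hDm : ∀ k : ℕ, MeasurableSet (A ∩ {x | (k : ℕ∞) < hitTime T A x} ∩ (T^[k]) ⁻¹' F) :=
    fun k => (hA.inter (measurableSet_lt_hitTime hT hA k)).inter ((hT.iterate k) hFm)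
  have hdisj := pairwise_D T A E
  have hUsub : U ⊆ shadow T A E := by
    refine Set.iUnion_mono fun k => ?_
    exact Set.inter_subset_inter (le_refl _) (Set.preimage_mono Set.inter_subset_left)
  have hdiffnull : μ (shadow T A E \ U) = 0 := by
    refine measure_mono_null ?_ (hitTime_eq_top_null hErg hA hApos)
    rintro x ⟨hxs, hxU⟩
    by_contra hne
    exact hxU (shadow_mem_aux hxs hne)
  have hμU : μ U = μ F := by
    rw [hUdef, MeasureTheory.measure_iUnion hdisj hDm]
    exact sum_D hErg hA hApos hFm
  have hshadow : μ (shadow T A E) = μ U := by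
    refine le_antisymm ?_ (MeasureTheory.measure_mono hUsub)
    calc μ (shadow T A E) ≤ μ (U ∪ (shadow T A E \ U)) := by
          refine MeasureTheory.measure_mono fun x hx => ?_
          by_cases hxU : x ∈ U
          · exact Or.inl hxU
          · exact Or.inr ⟨hx, hxU⟩
      _ ≤ μ U + μ (shadow T A E \ U) := MeasureTheory.measure_union_le _ _
      _ = μ U := by rw [hdiffnull, add_zero]
  refine ⟨hshadow.trans hμU, ?_, hdisj⟩
  rw [Set.symmDiff_def]
  refine MeasureTheory.measure_union_null hdiffnull ?_
  have : U \ shadow T A E = ∅ := Set.diff_eq_empty.2 hUsub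
  rw [this, MeasureTheory.measure_empty]
end

section
/- Let T : I → I be a Borel measurable map of a compact interval I, let ζ ∈ I be a periodic point of T of period p ≥ 1 such that T^p restricted to some neighbourhood of ζ is a C¹ diffeomorphism onto its image with |(T^p)′(ζ)| > 1, and let μ be a T-invariant Borel probability measure on I, absolutely continuous with respect to Lebesgue measure, whose density has a version that is continuous and strictly positive at ζ. Let (B_n) be open balls centred at ζ with radii tending to 0, and E(B_n) = T^{−p}(B_n) ∖ B_n. Then for every sequence of Borel sets A_n ⊆ B_n with μ(A_n) > 0, one has μ_{E(B_n)}(T^{−p}(A_n)) / μ_{B_n}(A_n) → 1 as n → ∞; that is, the push-forward of the conditional measure μ_{E(B_n)} under T^p is asymptotically equivalent to μ_{B_n} on subsets of B_n. -/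
open MeasureTheory Filter Set ProbabilityTheory
open scoped ENNReal Topology

noncomputable section

variable {X : Type*}

/-- `U_0(B) = B` and `U_{k+1}(B) = T^{-p}(U_k(B)) ∩ B`. -/
def Uset (T : X → X) (p : ℕ) (B : Set X) : ℕ → Set X
  | 0 => B
  | (k+1) => (T^[p]) ⁻¹' (Uset T p B k) ∩ B

/-- The annuli: `Q_0(B) = B ∩ T^{-p}(Bᶜ)` and `Q_{k+1}(B) = T^{-p}(Q_k(B)) ∩ B`. -/
def Qann (T : X → X) (p : ℕ) (B : Set X) : ℕ → Set X
  | 0 => B ∩ (T^[p]) ⁻¹' Bᶜ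
  | (k+1) => (T^[p]) ⁻¹' (Qann T p B k) ∩ B

/-- The entrance set `E(B) = T^{-p}(B) ∖ B`. -/
def Eset (T : X → X) (p : ℕ) (B : Set X) : Set X := (T^[p]) ⁻¹' B \ B

end

section MyHelpers

open Metric


/-- 1D change of variables for the Lebesgue integral. -/
theorem my_lintegral_image {s : Set ℝ} {f f' : ℝ → ℝ}
    (hs : MeasurableSet s) (hf' : ∀ x ∈ s, HasDerivWithinAt f (f' x) s x)
    (hf : Set.InjOn f s) (g : ℝ → ℝ≥0∞) :
    ∫⁻ x in f '' s, g x = ∫⁻ x in s, ENNReal.ofReal |f' x| * g (f x) := by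
  simpa only [ContinuousLinearMap.det_toSpanSingleton] using
    MeasureTheory.lintegral_image_eq_lintegral_abs_det_fderiv_mul volume hs
      (fun x hx => (hf' x hx).hasFDerivWithinAt) hf g

/-- Icc with endpoints in a real ball is inside the ball. -/
theorem my_Icc_subset_ball {ζ δ a b : ℝ} (ha : a ∈ ball ζ δ) (hb : b ∈ ball ζ δ) :
    Icc a b ⊆ ball ζ δ := by
  intro y hy
  simp only [mem_ball, Real.dist_eq] at *
  rcases abs_lt.1 ha with ⟨ha1, ha2⟩
  rcases abs_lt.1 hb with ⟨hb1, hb2⟩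
  rw [abs_lt]
  constructor <;> [linarith [hy.1]; linarith [hy.2]]

/-- expansion estimate via MVT -/
theorem my_expand {φ : ℝ → ℝ} {ζ δ m : ℝ} (hδ : 0 < δ)
    (hder : ∀ x ∈ ball ζ δ, HasDerivAt φ (deriv φ x) x)
    (hdm : ∀ x ∈ ball ζ δ, m ≤ |deriv φ x|) (hφζ : φ ζ = ζ) :
    ∀ x ∈ ball ζ δ, m * |x - ζ| ≤ |φ x - ζ| := by
  have hζ : ζ ∈ ball ζ δ := mem_ball_self hδ
  intro x hx
  rcases lt_trichotomy x ζ with h | h | h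
  · have hIcc : Icc x ζ ⊆ ball ζ δ := my_Icc_subset_ball hx hζ
    have hcont : ContinuousOn φ (Icc x ζ) :=
      fun y hy => ((hder y (hIcc hy)).continuousAt).continuousWithinAt
    obtain ⟨c, hc, hslope⟩ := exists_hasDerivAt_eq_slope φ (deriv φ) h hcont
      (fun y hy => hder y (hIcc (Ioo_subset_Icc_self hy)))
    have hcball : c ∈ ball ζ δ := hIcc (Ioo_subset_Icc_self hc)
    have h1 : φ ζ - φ x = deriv φ c * (ζ - x) := by
      rw [hslope, div_mul_cancel₀ _ (by linarith : ζ - x ≠ 0)]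
    have h2 : |φ x - ζ| = |deriv φ c| * |x - ζ| := by
      have : φ x - ζ = deriv φ c * (x - ζ) := by linear_combination -h1 + hφζ
      rw [this, abs_mul]
    rw [h2]
    exact mul_le_mul_of_nonneg_right (hdm c hcball) (abs_nonneg _)
  · simp [h, hφζ]
  · have hIcc : Icc ζ x ⊆ ball ζ δ := my_Icc_subset_ball hζ hx
    have hcont : ContinuousOn φ (Icc ζ x) :=
      fun y hy => ((hder y (hIcc hy)).continuousAt).continuousWithinAt
    obtain ⟨c, hc, hslope⟩ := exists_hasDerivAt_eq_slope φ (deriv φ) h hcont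
      (fun y hy => hder y (hIcc (Ioo_subset_Icc_self hy)))
    have hcball : c ∈ ball ζ δ := hIcc (Ioo_subset_Icc_self hc)
    have h1 : φ x - φ ζ = deriv φ c * (x - ζ) := by
      rw [hslope, div_mul_cancel₀ _ (by linarith : x - ζ ≠ 0)]
    have h2 : |φ x - ζ| = |deriv φ c| * |x - ζ| := by
      rw [← abs_mul, ← h1, hφζ]
    rw [h2]
    exact mul_le_mul_of_nonneg_right (hdm c hcball) (abs_nonneg _)

/-- surjectivity: small balls are contained in their image. -/
theorem my_surj {φ : ℝ → ℝ} {ζ δ r m : ℝ} (hr : 0 < r) (hrδ : r ≤ δ) (hm : 1 < m)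
    (hder : ∀ x ∈ ball ζ δ, HasDerivAt φ (deriv φ x) x)
    (hinj : Set.InjOn φ (ball ζ δ))
    (hdm : ∀ x ∈ ball ζ δ, m ≤ |deriv φ x|) (hφζ : φ ζ = ζ) :
    ball ζ r ⊆ φ '' ball ζ r := by
  have hδ : 0 < δ := lt_of_lt_of_le hr hrδ
  have hexp := my_expand hδ hder hdm hφζ
  set c : ℝ := r * (1 / m + 1) / 2 with hc
  have hm0 : 0 < m := lt_trans one_pos hm
  have hc0 : 0 < c := by positivity
  have hcr : c < r := by
    rw [hc]
    have : 1 / m < 1 := by rw [div_lt_one hm0]; exact hm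
    nlinarith
  have hrmc : r < m * c := by
    rw [hc]
    have : m * (r * (1 / m + 1) / 2) = (r + m * r) / 2 := by field_simp
    rw [this]
    nlinarith
  have hIccr : Icc (ζ - c) (ζ + c) ⊆ ball ζ r := by
    intro y hy
    simp only [mem_ball, Real.dist_eq, abs_lt]
    constructor <;> [linarith [hy.1]; linarith [hy.2]]
  have hIccδ : Icc (ζ - c) (ζ + c) ⊆ ball ζ δ :=
    hIccr.trans (ball_subset_ball hrδ)
  have hle : ζ - c ≤ ζ + c := by linarith
  have hcont : ContinuousOn φ (Icc (ζ - c) (ζ + c)) :=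
    fun y hy => ((hder y (hIccδ hy)).continuousAt).continuousWithinAt
  have hlow : m * c ≤ |φ (ζ - c) - ζ| := by
    have := hexp (ζ - c) (hIccδ ⟨le_refl _, by linarith⟩)
    simpa [abs_of_nonneg hc0.le] using this
  have hhigh : m * c ≤ |φ (ζ + c) - ζ| := by
    have := hexp (ζ + c) (hIccδ ⟨by linarith, le_refl _⟩)
    simpa [abs_of_nonneg hc0.le] using this
  intro y hy
  rw [mem_ball, Real.dist_eq, abs_lt] at hy
  rcases hcont.strictMonoOn_of_injOn_Icc' hle (hinj.mono hIccδ) with hmono | hanti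
  · -- increasing case
    have h1 : φ (ζ - c) < φ ζ := hmono ⟨le_refl _, by linarith⟩
      ⟨by linarith, by linarith⟩ (by linarith)
    have h2 : φ ζ < φ (ζ + c) := hmono ⟨by linarith, by linarith⟩
      ⟨by linarith, le_refl _⟩ (by linarith)
    rw [hφζ] at h1 h2
    have h1' : φ (ζ - c) ≤ ζ - m * c := by
      have := hlow
      rw [abs_of_nonpos (by linarith)] at this
      linarith
    have h2' : ζ + m * c ≤ φ (ζ + c) := by
      have := hhigh
      rw [abs_of_nonneg (by linarith)] at this
      linarith
    have hymem : y ∈ Icc (φ (ζ - c)) (φ (ζ + c)) :=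
      ⟨by linarith, by linarith⟩
    obtain ⟨x, hxI, hxy⟩ := intermediate_value_Icc hle hcont hymem
    exact ⟨x, hIccr hxI, hxy⟩
  · -- decreasing case
    have h1 : φ ζ < φ (ζ - c) := hanti ⟨le_refl _, by linarith⟩
      ⟨by linarith, by linarith⟩ (by linarith)
    have h2 : φ (ζ + c) < φ ζ := hanti ⟨by linarith, by linarith⟩
      ⟨by linarith, le_refl _⟩ (by linarith)
    rw [hφζ] at h1 h2
    have h1' : ζ + m * c ≤ φ (ζ - c) := by
      have := hlow
      rw [abs_of_nonneg (by linarith)] at this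
      linarith
    have h2' : φ (ζ + c) ≤ ζ - m * c := by
      have := hhigh
      rw [abs_of_nonpos (by linarith)] at this
      linarith
    have hymem : y ∈ Icc (φ (ζ + c)) (φ (ζ - c)) :=
      ⟨by linarith, by linarith⟩
    obtain ⟨x, hxI, hxy⟩ := intermediate_value_Icc' hle hcont hymem
    exact ⟨x, hIccr hxI, hxy⟩

/-- Core estimate: pull-back of sets in the ball has comparable measure. -/
theorem my_core {φ : ℝ → ℝ} (hφm : Measurable φ) {ρ : ℝ → ℝ} {ζ δ r m M lo hi : ℝ}
    (hr : 0 < r) (hrδ : r ≤ δ) (hm : 1 < m) (hlo : 0 < lo)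
    (hder : ∀ x ∈ ball ζ δ, HasDerivAt φ (deriv φ x) x)
    (hinj : Set.InjOn φ (ball ζ δ)) (hφζ : φ ζ = ζ)
    (hdm : ∀ x ∈ ball ζ δ, m ≤ |deriv φ x|)
    (hdM : ∀ x ∈ ball ζ δ, |deriv φ x| ≤ M)
    (hρlo : ∀ x ∈ ball ζ δ, lo ≤ ρ x)
    (hρhi : ∀ x ∈ ball ζ δ, ρ x ≤ hi)
    {S : Set ℝ} (hS : MeasurableSet S) (hSB : S ⊆ ball ζ r) :
    ENNReal.ofReal (lo / (M * hi)) * (volume.withDensity fun x => ENNReal.ofReal (ρ x)) S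
      ≤ (volume.withDensity fun x => ENNReal.ofReal (ρ x)) (φ ⁻¹' S ∩ ball ζ r) ∧
    (volume.withDensity fun x => ENNReal.ofReal (ρ x)) (φ ⁻¹' S ∩ ball ζ r)
      ≤ ENNReal.ofReal (hi / (m * lo)) * (volume.withDensity fun x => ENNReal.ofReal (ρ x)) S := by
  set μ := volume.withDensity fun x => ENNReal.ofReal (ρ x) with hμ
  have hδ : 0 < δ := lt_of_lt_of_le hr hrδ
  have hζδ : ζ ∈ ball ζ δ := mem_ball_self hδ
  have hm0 : 0 < m := lt_trans one_pos hm
  have hM : 0 < M := lt_of_lt_of_le hm0 ((hdm ζ hζδ).trans (hdM ζ hζδ))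
  have hhi : 0 < hi := lt_of_lt_of_le hlo ((hρlo ζ hζδ).trans (hρhi ζ hζδ))
  have hballs : ball ζ r ⊆ ball ζ δ := ball_subset_ball hrδ
  set t : Set ℝ := φ ⁻¹' S ∩ ball ζ r with htdef
  have ht : MeasurableSet t := (hφm hS).inter measurableSet_ball
  have htδ : t ⊆ ball ζ δ := inter_subset_right.trans hballs
  have himg : φ '' t = S := by
    apply Subset.antisymm
    · rintro y ⟨x, hx, rfl⟩; exact hx.1
    · intro y hy
      obtain ⟨x, hxball, hxy⟩ := my_surj hr hrδ hm hder hinj hdm hφζ (hSB hy)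
      exact ⟨x, ⟨by rw [mem_preimage, hxy]; exact hy, hxball⟩, hxy⟩
  have hderW : ∀ x ∈ t, HasDerivWithinAt φ (deriv φ x) t x :=
    fun x hx => (hder x (htδ hx)).hasDerivWithinAt
  have hinjt : Set.InjOn φ t := hinj.mono htδ
  have hμS : μ S = ∫⁻ x in t, ENNReal.ofReal |deriv φ x| * ENNReal.ofReal (ρ (φ x)) := by
    rw [hμ, withDensity_apply _ hS, ← himg, my_lintegral_image ht hderW hinjt]
  have hμt : μ t = ∫⁻ x in t, ENNReal.ofReal (ρ x) := by
    rw [hμ, withDensity_apply _ ht]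
  have key : ∀ (f : ℝ → ℝ≥0∞) (c C : ℝ≥0∞), (∀ x ∈ t, c ≤ f x) → (∀ x ∈ t, f x ≤ C) →
      c * volume t ≤ (∫⁻ x in t, f x) ∧ (∫⁻ x in t, f x) ≤ C * volume t := by
    intro f c C hc hC
    constructor
    · rw [← setLIntegral_const t c, ← lintegral_indicator ht, ← lintegral_indicator ht]
      apply lintegral_mono
      intro x
      by_cases hx : x ∈ t
      · simpa [Set.indicator_of_mem hx] using hc x hx
      · simp [Set.indicator_of_notMem hx]
    · rw [← setLIntegral_const t C, ← lintegral_indicator ht, ← lintegral_indicator ht]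
      apply lintegral_mono
      intro x
      by_cases hx : x ∈ t
      · simpa [Set.indicator_of_mem hx] using hC x hx
      · simp [Set.indicator_of_notMem hx]
  obtain ⟨hS1, hS2⟩ := key (fun x => ENNReal.ofReal |deriv φ x| * ENNReal.ofReal (ρ (φ x)))
      (ENNReal.ofReal (m * lo)) (ENNReal.ofReal (M * hi))
      (fun x hx => by
        rw [ENNReal.ofReal_mul hm0.le]
        exact mul_le_mul' (ENNReal.ofReal_le_ofReal (hdm x (htδ hx)))
          (ENNReal.ofReal_le_ofReal (hρlo (φ x) (hballs (hSB hx.1)))))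
      (fun x hx => by
        rw [ENNReal.ofReal_mul hM.le]
        exact mul_le_mul' (ENNReal.ofReal_le_ofReal (hdM x (htδ hx)))
          (ENNReal.ofReal_le_ofReal (hρhi (φ x) (hballs (hSB hx.1)))))
  obtain ⟨ht1, ht2⟩ := key (fun x => ENNReal.ofReal (ρ x))
      (ENNReal.ofReal lo) (ENNReal.ofReal hi)
      (fun x hx => ENNReal.ofReal_le_ofReal (hρlo x (htδ hx)))
      (fun x hx => ENNReal.ofReal_le_ofReal (hρhi x (htδ hx)))
  rw [← hμS] at hS1 hS2
  rw [← hμt] at ht1 ht2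
  constructor
  · calc ENNReal.ofReal (lo / (M * hi)) * μ S
        ≤ ENNReal.ofReal (lo / (M * hi)) * (ENNReal.ofReal (M * hi) * volume t) :=
          by gcongr
      _ = ENNReal.ofReal lo * volume t := by
          rw [← mul_assoc, ← ENNReal.ofReal_mul (by positivity),
            div_mul_cancel₀ _ (by positivity : M * hi ≠ 0)]
      _ ≤ μ t := ht1
  · calc μ t ≤ ENNReal.ofReal hi * volume t := ht2
      _ = ENNReal.ofReal (hi / (m * lo)) * (ENNReal.ofReal (m * lo) * volume t) := by
          rw [← mul_assoc, ← ENNReal.ofReal_mul (by positivity),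
            div_mul_cancel₀ _ (by positivity : m * lo ≠ 0)]
      _ ≤ ENNReal.ofReal (hi / (m * lo)) * μ S := by gcongr

/-- positivity of the measure of balls around a point of positive continuous density. -/
theorem my_ball_pos {ρ : ℝ → ℝ} {ζ : ℝ} (hρcont : ContinuousAt ρ ζ) (hρpos : 0 < ρ ζ) :
    ∀ s : ℝ, 0 < s → 0 < (volume.withDensity fun x => ENNReal.ofReal (ρ x)) (ball ζ s) := by
  have h := hρcont.eventually_mem (Ioi_mem_nhds (half_lt_self hρpos))
  rw [Metric.eventually_nhds_iff] at h
  obtain ⟨δ₂, hδ₂, hball⟩ := h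
  intro s hs
  set s' : ℝ := min s δ₂ with hs'
  have hs'0 : 0 < s' := lt_min hs hδ₂
  have hsub : ball ζ s' ⊆ ball ζ s := ball_subset_ball (min_le_left _ _)
  have h1 : ENNReal.ofReal (ρ ζ / 2) * volume (ball ζ s')
      ≤ (volume.withDensity fun x => ENNReal.ofReal (ρ x)) (ball ζ s') := by
    rw [withDensity_apply _ measurableSet_ball, ← setLIntegral_const,
      ← lintegral_indicator measurableSet_ball, ← lintegral_indicator measurableSet_ball]
    apply lintegral_mono
    intro x
    by_cases hx : x ∈ ball ζ s'
    · have : ρ ζ / 2 < ρ x := hball (lt_of_lt_of_le (mem_ball.1 hx) (min_le_right _ _))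
      simpa [Set.indicator_of_mem hx] using ENNReal.ofReal_le_ofReal this.le
    · simp [Set.indicator_of_notMem hx]
  have h2 : (0:ℝ≥0∞) < ENNReal.ofReal (ρ ζ / 2) * volume (ball ζ s') := by
    apply ENNReal.mul_pos
    · exact (ENNReal.ofReal_pos.2 (by linarith)).ne'
    · exact (measure_ball_pos volume ζ hs'0).ne'
  exact lt_of_lt_of_le (lt_of_lt_of_le h2 h1) (measure_mono hsub)


end MyHelpers

theorem statement11 (T : ℝ → ℝ) (hTmeas : Measurable T)
    (l u : ℝ) (hlu : l < u) (hmap : Set.MapsTo T (Set.Icc l u) (Set.Icc l u))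
    (ζ : ℝ) (hζI : ζ ∈ Set.Icc l u)
    (p : ℕ) (hp : 1 ≤ p) (hper : T^[p] ζ = ζ)
    (U : Set ℝ) (hU : IsOpen U) (hζU : ζ ∈ U)
    (hC1 : ContDiffOn ℝ 1 (T^[p]) U) (hinj : Set.InjOn (T^[p]) U)
    (hd : ∀ x ∈ U, deriv (T^[p]) x ≠ 0) (hexp : 1 < |deriv (T^[p]) ζ|)
    (μ : Measure ℝ) [IsProbabilityMeasure μ] (hinv : MeasurePreserving T μ μ)
    (hsupp : μ (Set.Icc l u)ᶜ = 0)
    (ρ : ℝ → ℝ) (hρ : μ = MeasureTheory.volume.withDensity (fun x => ENNReal.ofReal (ρ x)))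
    (hρcont : ContinuousAt ρ ζ) (hρpos : 0 < ρ ζ)
    (r : ℕ → ℝ) (hrpos : ∀ n, 0 < r n) (hr0 : Tendsto r atTop (𝓝 0)) :
    ∀ A : ℕ → Set ℝ, (∀ n, MeasurableSet (A n)) → (∀ n, A n ⊆ Metric.ball ζ (r n)) →
      (∀ n, 0 < μ (A n)) →
      Tendsto (fun n =>
          μ[|Eset T p (Metric.ball ζ (r n))] ((T^[p]) ⁻¹' (A n)) /
            μ[|Metric.ball ζ (r n)] (A n)) atTop (𝓝 1) := by
  intro A hAm hAB hApos
  set φ : ℝ → ℝ := T^[p] with hφdef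
  have hφm : Measurable φ := hTmeas.iterate p
  set lam : ℝ := |deriv φ ζ| with hlamdef
  have hlam1 : 1 < lam := hexp
  have hlam0 : 0 < lam := lt_trans one_pos hlam1
  have hμfin : ∀ s : Set ℝ, μ s ≠ ∞ := fun s => measure_ne_top μ s
  have hdiff : ∀ x ∈ U, HasDerivAt φ (deriv φ x) x := fun x hx =>
    ((hC1.differentiableOn one_ne_zero).differentiableAt (hU.mem_nhds hx)).hasDerivAt
  have hdcont : ContinuousOn (deriv φ) U := hC1.continuousOn_deriv_of_isOpen hU le_rfl
  have hpre : ∀ s : Set ℝ, MeasurableSet s → μ (φ ⁻¹' s) = μ s := fun s hs =>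
    (hinv.iterate p).measure_preimage hs.nullMeasurableSet
  have hballpos : ∀ n, 0 < μ (Metric.ball ζ (r n)) := by
    intro n
    rw [hρ]
    exact my_ball_pos hρcont hρpos (r n) (hrpos n)
  -- key convergence
  have hkey : ∀ (S : ℕ → Set ℝ), (∀ n, MeasurableSet (S n)) →
      (∀ n, S n ⊆ Metric.ball ζ (r n)) → (∀ n, 0 < μ (S n)) →
      Tendsto (fun n => (μ (φ ⁻¹' S n ∩ Metric.ball ζ (r n))).toReal / (μ (S n)).toReal)
        atTop (𝓝 lam⁻¹) := by
    intro S hSm hSB hSpos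
    rw [Metric.tendsto_atTop]
    intro ε hε
    -- choose ε'
    have hcont1 : ContinuousAt (fun x : ℝ => (ρ ζ + x) / ((lam - x) * (ρ ζ - x))) 0 := by
      apply ContinuousAt.div (by fun_prop) (by fun_prop)
      simp only [sub_zero]
      positivity
    have hcont2 : ContinuousAt (fun x : ℝ => (ρ ζ - x) / ((lam + x) * (ρ ζ + x))) 0 := by
      apply ContinuousAt.div (by fun_prop) (by fun_prop)
      simp only [add_zero]
      positivity
    have hval1 : (ρ ζ + 0) / ((lam - 0) * (ρ ζ - 0)) = lam⁻¹ := by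
      rw [add_zero, sub_zero, sub_zero]
      field_simp
    have hval2 : (ρ ζ - 0) / ((lam + 0) * (ρ ζ + 0)) = lam⁻¹ := by
      rw [add_zero, sub_zero, add_zero]
      field_simp
    have he1 : ∀ᶠ x in 𝓝 (0:ℝ),
        (ρ ζ + x) / ((lam - x) * (ρ ζ - x)) < lam⁻¹ + ε := by
      apply hcont1.eventually_mem (s := Iio (lam⁻¹ + ε))
      apply Iio_mem_nhds
      rw [hval1]
      linarith
    have he2 : ∀ᶠ x in 𝓝 (0:ℝ),
        lam⁻¹ - ε < (ρ ζ - x) / ((lam + x) * (ρ ζ + x)) := by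
      apply hcont2.eventually_mem (s := Ioi (lam⁻¹ - ε))
      apply Ioi_mem_nhds
      rw [hval2]
      linarith
    have he3 : ∀ᶠ x in 𝓝 (0:ℝ), x < lam - 1 := eventually_lt_nhds (by linarith)
    have he4 : ∀ᶠ x in 𝓝 (0:ℝ), x < ρ ζ := eventually_lt_nhds hρpos
    have hex : ∀ᶠ x in 𝓝[>] (0:ℝ),
        (((ρ ζ + x) / ((lam - x) * (ρ ζ - x)) < lam⁻¹ + ε ∧
          lam⁻¹ - ε < (ρ ζ - x) / ((lam + x) * (ρ ζ + x))) ∧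
          (x < lam - 1 ∧ x < ρ ζ)) :=
      eventually_nhdsWithin_of_eventually_nhds ((he1.and he2).and (he3.and he4))
    obtain ⟨ε', hcond, hε'pos⟩ := (hex.and eventually_mem_nhdsWithin).exists
    obtain ⟨⟨hc1, hc2⟩, hc3, hc4⟩ := hcond
    rw [mem_Ioi] at hε'pos
    set m : ℝ := lam - ε' with hmdef
    set M : ℝ := lam + ε' with hMdef
    set lo : ℝ := ρ ζ - ε' with hlodef
    set hi : ℝ := ρ ζ + ε' with hhidef
    have hm : 1 < m := by rw [hmdef]; linarith
    have hlo : 0 < lo := by rw [hlodef]; linarith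
    -- choose δ
    have hevδ : ∀ᶠ x in 𝓝 ζ, x ∈ U ∧ (m ≤ |deriv φ x| ∧ |deriv φ x| ≤ M)
        ∧ (lo ≤ ρ x ∧ ρ x ≤ hi) := by
      have e1 : ∀ᶠ x in 𝓝 ζ, x ∈ U := hU.eventually_mem hζU
      have habs : ContinuousAt (fun x => |deriv φ x|) ζ :=
        (hdcont.continuousAt (hU.mem_nhds hζU)).abs
      have e2 : ∀ᶠ x in 𝓝 ζ, |deriv φ x| ∈ Icc m M := by
        apply habs.eventually_mem
        apply Icc_mem_nhds
        · rw [hmdef, ← hlamdef]; linarith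
        · rw [hMdef, ← hlamdef]; linarith
      have e3 : ∀ᶠ x in 𝓝 ζ, ρ x ∈ Icc lo hi := by
        apply hρcont.eventually_mem
        apply Icc_mem_nhds
        · rw [hlodef]; linarith
        · rw [hhidef]; linarith
      filter_upwards [e1, e2, e3] with x h1 h2 h3 using ⟨h1, ⟨h2.1, h2.2⟩, ⟨h3.1, h3.2⟩⟩
    rw [Metric.eventually_nhds_iff] at hevδ
    obtain ⟨δ, hδpos, hδ⟩ := hevδ
    have hballδ : ∀ x ∈ Metric.ball ζ δ, x ∈ U ∧ (m ≤ |deriv φ x| ∧ |deriv φ x| ≤ M)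
        ∧ (lo ≤ ρ x ∧ ρ x ≤ hi) := fun x hx => hδ (Metric.mem_ball.1 hx)
    have hrev : ∀ᶠ n in atTop, r n < δ := hr0.eventually_mem (Iio_mem_nhds hδpos)
    obtain ⟨N, hN⟩ := eventually_atTop.1 hrev
    refine ⟨N, fun n hn => ?_⟩
    have hrn : r n < δ := hN n hn
    have hcore := my_core (φ := φ) hφm (ρ := ρ) (ζ := ζ) (δ := δ)
        (hrpos n) hrn.le hm hlo
        (fun x hx => hdiff x (hballδ x hx).1)
        (hinj.mono (fun x hx => (hballδ x hx).1)) hper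
        (fun x hx => (hballδ x hx).2.1.1)
        (fun x hx => (hballδ x hx).2.1.2)
        (fun x hx => (hballδ x hx).2.2.1)
        (fun x hx => (hballδ x hx).2.2.2)
        (hSm n) (hSB n)
    rw [← hρ] at hcore
    set a : ℝ := (μ (S n)).toReal with hadef
    set ta : ℝ := (μ (φ ⁻¹' S n ∩ Metric.ball ζ (r n))).toReal with htadef
    have ha0 : 0 < a := ENNReal.toReal_pos (hSpos n).ne' (hμfin _)
    have hMhi : 0 < M * hi := by
      have : 0 < M := by rw [hMdef]; linarith
      have : 0 < hi := by rw [hhidef]; linarith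
      positivity
    have hmlo : 0 < m * lo := by positivity
    have hup : ta ≤ hi / (m * lo) * a := by
      calc ta ≤ (ENNReal.ofReal (hi / (m * lo)) * μ (S n)).toReal :=
            ENNReal.toReal_mono (ENNReal.mul_ne_top ENNReal.ofReal_ne_top (hμfin _)) hcore.2
        _ = hi / (m * lo) * a := by
            rw [ENNReal.toReal_mul, ENNReal.toReal_ofReal (by positivity)]
    have hdown : lo / (M * hi) * a ≤ ta := by
      calc lo / (M * hi) * a = (ENNReal.ofReal (lo / (M * hi)) * μ (S n)).toReal := by
            rw [ENNReal.toReal_mul, ENNReal.toReal_ofReal (by positivity)]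
        _ ≤ ta := ENNReal.toReal_mono (hμfin _) hcore.1
    rw [Real.dist_eq, abs_sub_lt_iff]
    have hFle : ta / a ≤ hi / (m * lo) := by
      rw [div_le_iff₀ ha0]; exact hup
    have hFge : lo / (M * hi) ≤ ta / a := by
      rw [le_div_iff₀ ha0]; exact hdown
    constructor
    · have := hc1
      linarith
    · have := hc2
      linarith
  -- assemble
  have hGlim := hkey (fun n => Metric.ball ζ (r n)) (fun n => measurableSet_ball)
    (fun n => Subset.rfl) hballpos
  have hFlim := hkey A hAm hAB hApos
  set B : ℕ → Set ℝ := fun n => Metric.ball ζ (r n) with hBdef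
  set F : ℕ → ℝ := fun n => (μ (φ ⁻¹' A n ∩ B n)).toReal / (μ (A n)).toReal with hFdef
  set G : ℕ → ℝ := fun n => (μ (φ ⁻¹' B n ∩ B n)).toReal / (μ (B n)).toReal with hGdef
  have hlaminv : lam⁻¹ < 1 := inv_lt_one_of_one_lt₀ hlam1
  have hG1 : ∀ᶠ n in atTop, G n < 1 := hGlim.eventually_mem (Iio_mem_nhds hlaminv)
  have hmain : Tendsto (fun n => (1 - F n) / (1 - G n)) atTop (𝓝 1) := by
    have hne : (1 : ℝ) - lam⁻¹ ≠ 0 := by linarith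
    have h1 : Tendsto (fun n => 1 - F n) atTop (𝓝 (1 - lam⁻¹)) :=
      tendsto_const_nhds.sub hFlim
    have h2 : Tendsto (fun n => 1 - G n) atTop (𝓝 (1 - lam⁻¹)) :=
      tendsto_const_nhds.sub hGlim
    have := h1.div h2 hne
    rwa [div_self hne] at this
  have heq : ∀ᶠ n in atTop,
      ENNReal.ofReal ((1 - F n) / (1 - G n)) =
        μ[|Eset T p (B n)] (φ ⁻¹' A n) / μ[|B n] (A n) := by
    filter_upwards [hG1] with n hGn
    have hBm : MeasurableSet (B n) := measurableSet_ball
    have hEm : MeasurableSet (Eset T p (B n)) := (hφm hBm).diff hBm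
    have hb' : μ (φ ⁻¹' B n) = μ (B n) := hpre _ hBm
    have ha' : μ (φ ⁻¹' A n) = μ (A n) := hpre _ (hAm n)
    have hsplitB : μ (φ ⁻¹' B n ∩ B n) + μ (Eset T p (B n)) = μ (B n) := by
      rw [← hb']
      exact measure_inter_add_diff _ hBm
    have hEA : Eset T p (B n) ∩ φ ⁻¹' A n = φ ⁻¹' A n \ B n := by
      ext x
      simp only [Eset, mem_inter_iff, mem_diff, mem_preimage]
      constructor
      · rintro ⟨⟨h1, h2⟩, h3⟩; exact ⟨h3, h2⟩
      · rintro ⟨h1, h2⟩; exact ⟨⟨hAB n h1, h2⟩, h1⟩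
    have hsplitA : μ (φ ⁻¹' A n ∩ B n) + μ (Eset T p (B n) ∩ φ ⁻¹' A n) = μ (A n) := by
      rw [hEA, ← ha']
      exact measure_inter_add_diff _ hBm
    set a : ℝ := (μ (A n)).toReal with hadef
    set b : ℝ := (μ (B n)).toReal with hbdef
    set ta : ℝ := (μ (φ ⁻¹' A n ∩ B n)).toReal with htadef
    set tb : ℝ := (μ (φ ⁻¹' B n ∩ B n)).toReal with htbdef
    set ea : ℝ := (μ (Eset T p (B n) ∩ φ ⁻¹' A n)).toReal with headef
    set eb : ℝ := (μ (Eset T p (B n))).toReal with hebdef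
    have h_a : ta + ea = a := by
      rw [hadef, htadef, headef, ← ENNReal.toReal_add (hμfin _) (hμfin _), hsplitA]
    have h_b : tb + eb = b := by
      rw [hbdef, htbdef, hebdef, ← ENNReal.toReal_add (hμfin _) (hμfin _), hsplitB]
    have ha0 : 0 < a := ENNReal.toReal_pos (hApos n).ne' (hμfin _)
    have hb0 : 0 < b := ENNReal.toReal_pos (hballpos n).ne' (hμfin _)
    have htb : tb < b := by
      have : G n < 1 := hGn
      rw [hGdef] at this
      simp only [← htbdef, ← hbdef] at this
      rwa [div_lt_one hb0] at this
    have heb0 : 0 < eb := by linarith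
    have hEne : μ (Eset T p (B n)) ≠ 0 := by
      intro h
      rw [hebdef, h, ENNReal.toReal_zero] at heb0
      exact lt_irrefl 0 heb0
    rw [ProbabilityTheory.cond_apply hEm, ProbabilityTheory.cond_apply hBm,
      Set.inter_eq_self_of_subset_right (hAB n)]
    have hXne : (μ (Eset T p (B n)))⁻¹ * μ (Eset T p (B n) ∩ φ ⁻¹' A n) /
        ((μ (B n))⁻¹ * μ (A n)) ≠ ∞ := by
      apply (ENNReal.div_lt_top _ _).ne
      · exact ENNReal.mul_ne_top (ENNReal.inv_ne_top.2 hEne) (hμfin _)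
      · exact mul_ne_zero (ENNReal.inv_ne_zero.2 (hμfin _)) (hApos n).ne'
    rw [← ENNReal.ofReal_toReal hXne]
    congr 1
    rw [ENNReal.toReal_div, ENNReal.toReal_mul, ENNReal.toReal_mul,
      ENNReal.toReal_inv, ENNReal.toReal_inv]
    simp only [← hadef, ← hbdef, ← headef, ← hebdef]
    have hF : F n = ta / a := by rw [hFdef]
    have hG : G n = tb / b := by rw [hGdef]
    rw [hF, hG]
    have h1F : 1 - ta / a = ea / a := by
      field_simp
      linarith
    have h1G : 1 - tb / b = eb / b := by
      field_simp
      linarith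
    rw [h1F, h1G]
    rw [div_div_div_eq]
    field_simp [ha0.ne', hb0.ne', heb0.ne']
  have hof : Tendsto (fun n => ENNReal.ofReal ((1 - F n) / (1 - G n))) atTop (𝓝 1) := by
    simpa using ENNReal.tendsto_ofReal hmain
  exact hof.congr' heq
end
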